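/- arXiv:2603.25208 — 6 statements merged into one kernel-verified Lean document; each statement's English description precedes it below -/
import Mathlib

section
/- Let (Ω, ℱ, ℙ, σ) be a measure-preserving dynamical system, let f : Ω → ℋ be the generator of a random circle homeomorphism, and let F be its standard lift (the unique lift with F_ω(0) ∈ [0,1) for every ω). Then for every x₀ ∈ [0,1), every ω ∈ Ω and every n ∈ ℕ with n ≥ 1, |(1/n) F^(n)_ω(x₀) − B_f(n, ω, x₀)| < 1/n. -/
open MeasureTheory

/-- Iterated composition of a random lift:
`iterLift σ F n ω = F_{σ^{n-1} ω} ∘ ⋯ ∘ F_{σ ω} ∘ F_ω`. -/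
def iterLift {Ω : Type*} (σ : Ω → Ω) (F : Ω → ℝ → ℝ) : ℕ → Ω → ℝ → ℝ
  | 0, _, x => x
  | n + 1, ω, x => iterLift σ F n (σ ω) (F ω x)

/-- Iterated composition of the induced interval maps `f̂_ω = Int.fract ∘ F_ω` on `[0,1)`:
`iterHat σ F n ω = f̂_{σ^{n-1} ω} ∘ ⋯ ∘ f̂_ω`. -/
noncomputable def iterHat {Ω : Type*} (σ : Ω → Ω) (F : Ω → ℝ → ℝ) : ℕ → Ω → ℝ → ℝ
  | 0, _, x => x
  | n + 1, ω, x => iterHat σ F n (σ ω) (Int.fract (F ω x))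

/-- `S_ω`, the indicator function of the right interval `J_ω`, where
`J_ω = [c_ω, 1)` if `f̂_ω(0) ≠ 0` and `J_ω = ∅` if `f̂_ω(0) = 0`, and where
`c_ω = f_ω⁻¹(0)` is described by the data `c : Ω → ℝ`. -/
noncomputable def rightInd {Ω : Type*} (F : Ω → ℝ → ℝ) (c : Ω → ℝ) (ω : Ω) : ℝ → ℝ :=
  Set.indicator (if Int.fract (F ω 0) ≠ 0 then Set.Ico (c ω) 1 else (∅ : Set ℝ)) fun _ => 1

/-- The `n`-th binary coding frequency
`B_f(n, ω, x₀) = (1/n) ∑_{k=0}^{n-1} S_{σ^k ω}(f̂^{(k)}_ω(x₀))`. -/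
noncomputable def binFreq {Ω : Type*} (σ : Ω → Ω) (F : Ω → ℝ → ℝ) (c : Ω → ℝ)
    (n : ℕ) (ω : Ω) (x₀ : ℝ) : ℝ :=
  (∑ k ∈ Finset.range n, rightInd F c (σ^[k] ω) (iterHat σ F k ω x₀)) / n

lemma iterLift_add_one {Ω : Type*} (σ : Ω → Ω) (F : Ω → ℝ → ℝ)
    (hdeg : ∀ ω (x : ℝ), F ω (x + 1) = F ω x + 1) :
    ∀ (n : ℕ) (ω : Ω) (y : ℝ), iterLift σ F n ω (y + 1) = iterLift σ F n ω y + 1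
  | 0, ω, y => rfl
  | n + 1, ω, y => by
      show iterLift σ F n (σ ω) (F ω (y + 1)) = iterLift σ F n (σ ω) (F ω y) + 1
      rw [hdeg ω y, iterLift_add_one σ F hdeg n (σ ω) (F ω y)]

lemma rightInd_cases {Ω : Type*} (F : Ω → ℝ → ℝ) (c : Ω → ℝ) (ω : Ω) (x : ℝ) :
    rightInd F c ω x = 0 ∨ rightInd F c ω x = 1 := by
  unfold rightInd
  by_cases h : x ∈ (if Int.fract (F ω 0) ≠ 0 then Set.Ico (c ω) 1 else (∅ : Set ℝ))
  · right; exact Set.indicator_of_mem h _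
  · left; exact Set.indicator_of_notMem h _

lemma step_eq {Ω : Type*} (F : Ω → ℝ → ℝ)
    (hmono : ∀ ω, StrictMono (F ω))
    (hdeg : ∀ ω (x : ℝ), F ω (x + 1) = F ω x + 1)
    (hstd : ∀ ω, F ω 0 ∈ Set.Ico (0 : ℝ) 1)
    (c : Ω → ℝ)
    (hc : ∀ ω, c ω ∈ Set.Ico (0 : ℝ) 1 ∧ Int.fract (F ω (c ω)) = 0)
    (ω : Ω) (x : ℝ) (hx : x ∈ Set.Ico (0 : ℝ) 1) :
    F ω x = Int.fract (F ω x) + rightInd F c ω x := by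
  obtain ⟨hx0, hx1⟩ := hx
  obtain ⟨hF0a, hF0b⟩ := hstd ω
  have hF1 : F ω 1 = F ω 0 + 1 := by simpa using hdeg ω 0
  have hfx0 : F ω 0 ≤ F ω x := (hmono ω).le_iff_le.mpr hx0
  have hfx1 : F ω x < F ω 0 + 1 := hF1 ▸ (hmono ω).lt_iff_lt.mpr hx1
  have hfr0 : Int.fract (F ω 0) = F ω 0 := Int.fract_eq_self.mpr ⟨hF0a, hF0b⟩
  by_cases h0 : Int.fract (F ω 0) = 0
  · have hF00 : F ω 0 = 0 := by rw [← hfr0, h0]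
    have hind : rightInd F c ω x = 0 := by
      unfold rightInd
      simp [h0]
    rw [hind, Int.fract_eq_self.mpr ⟨by linarith, by linarith⟩]
    ring
  · have hF0pos : 0 < F ω 0 := by
      rcases lt_or_eq_of_le hF0a with h | h
      · exact h
      · exact absurd (by rw [hfr0, ← h]) h0
    obtain ⟨⟨hc0, hc1⟩, hcf⟩ := hc ω
    have hFc1 : F ω (c ω) = 1 := by
      have hfloor : F ω (c ω) = (⌊F ω (c ω)⌋ : ℝ) := by
        have : F ω (c ω) - (⌊F ω (c ω)⌋ : ℝ) = 0 := hcf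
        linarith
      have hlb : 0 < F ω (c ω) := lt_of_lt_of_le hF0pos ((hmono ω).le_iff_le.mpr hc0)
      have hub : F ω (c ω) < 2 := by
        have := hF1 ▸ (hmono ω).lt_iff_lt.mpr hc1
        linarith
      have h1 : (0 : ℝ) < (⌊F ω (c ω)⌋ : ℝ) := hfloor ▸ hlb
      have h2 : ((⌊F ω (c ω)⌋ : ℝ)) < 2 := hfloor ▸ hub
      have h1' : (0 : ℤ) < ⌊F ω (c ω)⌋ := by exact_mod_cast h1
      have h2' : ⌊F ω (c ω)⌋ < 2 := by exact_mod_cast h2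
      have : ⌊F ω (c ω)⌋ = 1 := by omega
      rw [hfloor, this]; norm_num
    by_cases hxc : c ω ≤ x
    · have h1le : (1 : ℝ) ≤ F ω x := hFc1 ▸ (hmono ω).le_iff_le.mpr hxc
      have hlt2 : F ω x < 2 := by linarith
      have hind : rightInd F c ω x = 1 := by
        unfold rightInd
        rw [if_pos h0]
        exact Set.indicator_of_mem (Set.mem_Ico.mpr ⟨hxc, hx1⟩) _
      have hfr : Int.fract (F ω x) = F ω x - 1 := by
        have h := Int.fract_sub_intCast (F ω x) (1 : ℤ)
        rw [← h]
        push_cast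
        exact Int.fract_eq_self.mpr ⟨by linarith, by linarith⟩
      rw [hind, hfr]; ring
    · have hlt1 : F ω x < 1 := hFc1 ▸ (hmono ω).lt_iff_lt.mpr (not_le.mp hxc)
      have hind : rightInd F c ω x = 0 := by
        unfold rightInd
        rw [if_pos h0]
        exact Set.indicator_of_notMem (fun hmem => hxc hmem.1) _
      rw [hind, Int.fract_eq_self.mpr ⟨by linarith, hlt1⟩]; ring

lemma iterHat_mem {Ω : Type*} (σ : Ω → Ω) (F : Ω → ℝ → ℝ) :
    ∀ (n : ℕ) (ω : Ω) (x : ℝ), x ∈ Set.Ico (0 : ℝ) 1 →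
      iterHat σ F n ω x ∈ Set.Ico (0 : ℝ) 1
  | 0, ω, x, hx => hx
  | n + 1, ω, x, hx =>
      iterHat_mem σ F n (σ ω) _ ⟨Int.fract_nonneg _, Int.fract_lt_one _⟩

lemma iterLift_eq {Ω : Type*} (σ : Ω → Ω) (F : Ω → ℝ → ℝ)
    (hmono : ∀ ω, StrictMono (F ω))
    (hdeg : ∀ ω (x : ℝ), F ω (x + 1) = F ω x + 1)
    (hstd : ∀ ω, F ω 0 ∈ Set.Ico (0 : ℝ) 1)
    (c : Ω → ℝ)
    (hc : ∀ ω, c ω ∈ Set.Ico (0 : ℝ) 1 ∧ Int.fract (F ω (c ω)) = 0) :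
    ∀ (n : ℕ) (ω : Ω) (x : ℝ), x ∈ Set.Ico (0 : ℝ) 1 →
      iterLift σ F n ω x = iterHat σ F n ω x
        + ∑ k ∈ Finset.range n, rightInd F c (σ^[k] ω) (iterHat σ F k ω x)
  | 0, ω, x, hx => by simp [iterLift, iterHat]
  | n + 1, ω, x, hx => by
      have hfr : Int.fract (F ω x) ∈ Set.Ico (0 : ℝ) 1 :=
        ⟨Int.fract_nonneg _, Int.fract_lt_one _⟩
      have IH := iterLift_eq σ F hmono hdeg hstd c hc n (σ ω) (Int.fract (F ω x)) hfr
      have hFx : F ω x = Int.fract (F ω x) + rightInd F c ω x :=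
        step_eq F hmono hdeg hstd c hc ω x hx
      have hlift : iterLift σ F (n + 1) ω x
          = iterLift σ F n (σ ω) (Int.fract (F ω x)) + rightInd F c ω x := by
        show iterLift σ F n (σ ω) (F ω x) = _
        rcases rightInd_cases F c ω x with h | h
        · rw [h, add_zero]; congr 1; rw [hFx, h, add_zero, Int.fract_fract]
        · rw [h, ← iterLift_add_one σ F hdeg n (σ ω) (Int.fract (F ω x))]
          congr 1; rw [hFx, h, Int.fract_add_one, Int.fract_fract]
      rw [hlift, IH]
      have hsum : ∑ k ∈ Finset.range (n + 1), rightInd F c (σ^[k] ω) (iterHat σ F k ω x)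
          = (∑ k ∈ Finset.range n,
              rightInd F c (σ^[k] (σ ω)) (iterHat σ F k (σ ω) (Int.fract (F ω x))))
            + rightInd F c ω x := by
        rw [Finset.sum_range_succ']
        simp only [Function.iterate_succ_apply, Function.iterate_zero_apply, iterHat]
      rw [hsum]
      have hhat : iterHat σ F (n + 1) ω x = iterHat σ F n (σ ω) (Int.fract (F ω x)) := rfl
      rw [hhat]; ring

/-- if `F` is the standard lift of the generator `f` of a random circle
homeomorphism over a measure-preserving system, then for every `x₀ ∈ [0,1)`, every `ω`
and every `n ≥ 1`, `|(1/n) F^{(n)}_ω(x₀) − B_f(n, ω, x₀)| < 1/n`. -/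
theorem binary_coding_error_bound
    {Ω : Type*} [MeasurableSpace Ω] (ℙ : Measure Ω) [IsProbabilityMeasure ℙ]
    (σ : Ω → Ω) (hσ : MeasurePreserving σ ℙ ℙ)
    (F : Ω → ℝ → ℝ) (hmeas : Measurable (Function.uncurry F))
    (hmono : ∀ ω, StrictMono (F ω)) (hcont : ∀ ω, Continuous (F ω))
    (hsurj : ∀ ω, Function.Surjective (F ω))
    (hdeg : ∀ ω (x : ℝ), F ω (x + 1) = F ω x + 1)
    (hstd : ∀ ω, F ω 0 ∈ Set.Ico (0 : ℝ) 1)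
    (c : Ω → ℝ)
    (hc : ∀ ω, c ω ∈ Set.Ico (0 : ℝ) 1 ∧ Int.fract (F ω (c ω)) = 0) :
    ∀ x₀ ∈ Set.Ico (0 : ℝ) 1, ∀ (ω : Ω) (n : ℕ), 1 ≤ n →
      |(1 / n : ℝ) * iterLift σ F n ω x₀ - binFreq σ F c n ω x₀| < 1 / n := by
  intro x₀ hx₀ ω n hn
  have hnpos : (0 : ℝ) < n := by exact_mod_cast hn
  have key := iterLift_eq σ F hmono hdeg hstd c hc n ω x₀ hx₀
  have hH := iterHat_mem σ F n ω x₀ hx₀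
  have heq : (1 / n : ℝ) * iterLift σ F n ω x₀ - binFreq σ F c n ω x₀
      = iterHat σ F n ω x₀ / n := by
    rw [key, binFreq]
    field_simp
    ring
  rw [heq, abs_of_nonneg (div_nonneg hH.1 hnpos.le)]
  exact div_lt_div_of_pos_right hH.2 hnpos
end

section
/- Let (Ω, ℱ, ℙ, σ) be a measure-preserving dynamical system, let f : Ω → ℋ be the generator of a random circle homeomorphism, and let F be its standard lift. Fix x₀ ∈ [0,1) and suppose that for ℙ-almost every ω ∈ Ω the random rotation number ρ_F(ω) = lim_{n→∞} (F^(n)_ω(x₀) − x₀)/n exists. Then for ℙ-almost every ω ∈ Ω, lim_{n→∞} B_f(n, ω, x₀) = ρ_F(ω). -/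
open MeasureTheory

open Filter Topology

lemma degZ {Ω : Type*} (F : Ω → ℝ → ℝ) (hdeg : ∀ ω (x : ℝ), F ω (x + 1) = F ω x + 1)
    (ω : Ω) (m : ℤ) (x : ℝ) : F ω (x + m) = F ω x + m := by
  induction m using Int.induction_on with
  | zero => simp
  | succ n ih =>
      have h : F ω (x + (n : ℝ) + 1) = F ω (x + (n : ℝ)) + 1 := hdeg ω _
      push_cast at ih ⊢
      rw [← add_assoc, h, ih]; ring
  | pred n ih =>
      have h : F ω (x + (-(n : ℝ) - 1) + 1) = F ω (x + (-(n : ℝ) - 1)) + 1 := hdeg ω _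
      push_cast at ih ⊢
      have h2 : x + (-(n : ℝ) - 1) + 1 = x + -(n : ℝ) := by ring
      rw [h2] at h
      linarith

lemma liftZ {Ω : Type*} (σ : Ω → Ω) (F : Ω → ℝ → ℝ)
    (hdeg : ∀ ω (x : ℝ), F ω (x + 1) = F ω x + 1) :
    ∀ (n : ℕ) (ω : Ω) (m : ℤ) (x : ℝ),
      iterLift σ F n ω (x + m) = iterLift σ F n ω x + m := by
  intro n
  induction n with
  | zero => intro ω m x; rfl
  | succ n ih =>
      intro ω m x
      show iterLift σ F n (σ ω) (F ω (x + m)) = iterLift σ F n (σ ω) (F ω x) + m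
      rw [degZ F hdeg ω m x, ih]

lemma step_eq_s3 (G : ℝ → ℝ) (hmono : StrictMono G)
    (hdeg : ∀ x : ℝ, G (x + 1) = G x + 1) (h0 : G 0 ∈ Set.Ico (0:ℝ) 1)
    (c : ℝ) (hc : c ∈ Set.Ico (0:ℝ) 1) (hcfr : Int.fract (G c) = 0)
    (t : ℝ) (ht : t ∈ Set.Ico (0:ℝ) 1) :
    Set.indicator (if Int.fract (G 0) ≠ 0 then Set.Ico c 1 else (∅ : Set ℝ))
      (fun _ => (1:ℝ)) t = (⌊G t⌋ : ℝ) := by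
  have hG0 : Int.fract (G 0) = G 0 := Int.fract_eq_self.mpr h0
  have hG1 : G 1 = G 0 + 1 := by have := hdeg 0; simpa using this
  by_cases h : Int.fract (G 0) = 0
  · have hG0z : G 0 = 0 := by rw [← hG0]; exact h
    have h1 : (0:ℝ) ≤ G t := by rw [← hG0z]; exact hmono.monotone ht.1
    have h2 : G t < 1 := by
      have := hmono ht.2; rw [hG1, hG0z] at this; linarith
    rw [if_neg (by simpa using h)]
    rw [Int.floor_eq_zero_iff.mpr ⟨h1, h2⟩]
    simp
  · have hG0pos : 0 < G 0 := lt_of_le_of_ne h0.1 (by rw [← hG0]; exact fun e => h e.symm)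
    have hfl : (⌊G c⌋ : ℝ) = G c := by
      have : G c - ⌊G c⌋ = 0 := hcfr
      linarith
    have hGc1 : G c = 1 := by
      have hge : G 0 ≤ G c := hmono.monotone hc.1
      have hlt : G c < G 0 + 1 := by rw [← hG1]; exact hmono hc.2
      have h0lt : (0:ℝ) < (⌊G c⌋ : ℝ) := by linarith
      have h2lt : (⌊G c⌋ : ℝ) < 2 := by
        have : G 0 < 1 := h0.2; linarith
      have : (0:ℤ) < ⌊G c⌋ := by exact_mod_cast h0lt
      have h2 : ⌊G c⌋ < 2 := by exact_mod_cast h2lt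
      have : ⌊G c⌋ = 1 := by omega
      rw [← hfl, this]; norm_num
    rw [if_pos h]
    by_cases hct : c ≤ t
    · have hmem : t ∈ Set.Ico c 1 := ⟨hct, ht.2⟩
      rw [Set.indicator_of_mem hmem]
      have h1 : (1:ℝ) ≤ G t := by rw [← hGc1]; exact hmono.monotone hct
      have h2 : G t < 2 := by
        have := hmono ht.2; rw [hG1] at this
        have : G 0 < 1 := h0.2
        have := hmono ht.2; rw [hG1] at this; linarith [h0.2]
      have : ⌊G t⌋ = 1 := by
        rw [Int.floor_eq_iff]
        constructor
        · exact_mod_cast h1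
        · push_cast; linarith
      rw [this]; norm_num
    · have hmem : t ∉ Set.Ico c 1 := fun ⟨a, _⟩ => hct a
      rw [Set.indicator_of_notMem hmem]
      have h1 : (0:ℝ) ≤ G t := le_trans h0.1 (hmono.monotone ht.1)
      have h2 : G t < 1 := by
        rw [← hGc1]; exact hmono (lt_of_not_ge hct)
      rw [Int.floor_eq_zero_iff.mpr ⟨h1, h2⟩]
      simp

lemma sum_eq_floor {Ω : Type*} (σ : Ω → Ω) (F : Ω → ℝ → ℝ)
    (hmono : ∀ ω, StrictMono (F ω))
    (hdeg : ∀ ω (x : ℝ), F ω (x + 1) = F ω x + 1)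
    (hstd : ∀ ω, F ω 0 ∈ Set.Ico (0 : ℝ) 1)
    (c : Ω → ℝ)
    (hc : ∀ ω, c ω ∈ Set.Ico (0 : ℝ) 1 ∧ Int.fract (F ω (c ω)) = 0) :
    ∀ (n : ℕ) (ω : Ω) (x : ℝ), x ∈ Set.Ico (0:ℝ) 1 →
      ∑ k ∈ Finset.range n, rightInd F c (σ^[k] ω) (iterHat σ F k ω x)
        = (⌊iterLift σ F n ω x⌋ : ℝ) := by
  intro n
  induction n with
  | zero =>
      intro ω x hx
      simp [iterLift, Int.floor_eq_zero_iff.mpr ⟨hx.1, hx.2⟩]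
  | succ n ih =>
      intro ω x hx
      rw [Finset.sum_range_succ']
      have hterm : ∀ k, rightInd F c (σ^[k+1] ω) (iterHat σ F (k+1) ω x)
          = rightInd F c (σ^[k] (σ ω)) (iterHat σ F k (σ ω) (Int.fract (F ω x))) := by
        intro k
        rw [Function.iterate_succ_apply]
        rfl
      simp only [hterm]
      have hfr : Int.fract (F ω x) ∈ Set.Ico (0:ℝ) 1 :=
        ⟨Int.fract_nonneg _, Int.fract_lt_one _⟩
      rw [ih (σ ω) _ hfr]
      have h0 : rightInd F c (σ^[0] ω) (iterHat σ F 0 ω x) = (⌊F ω x⌋ : ℝ) := by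
        show rightInd F c ω x = (⌊F ω x⌋ : ℝ)
        exact step_eq_s3 (F ω) (hmono ω) (hdeg ω) (hstd ω) (c ω) (hc ω).1 (hc ω).2 x hx
      rw [h0]
      have key : iterLift σ F (n+1) ω x
          = iterLift σ F n (σ ω) (Int.fract (F ω x)) + (⌊F ω x⌋ : ℝ) := by
        show iterLift σ F n (σ ω) (F ω x) = _
        conv_lhs => rw [show F ω x = Int.fract (F ω x) + (⌊F ω x⌋ : ℤ) by
          rw [Int.fract]; push_cast; ring]
        exact liftZ σ F hdeg n (σ ω) ⌊F ω x⌋ _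
      rw [key]
      push_cast [Int.floor_add_intCast]
      ring

/-- if `F` is the standard lift of the generator `f` of a random circle
homeomorphism over a measure-preserving system, `x₀ ∈ [0,1)`, and for ℙ-almost every `ω`
the random rotation number `ρ_F(ω) = lim_n (F^{(n)}_ω(x₀) − x₀)/n` exists, then for
ℙ-almost every `ω`, `lim_n B_f(n, ω, x₀) = ρ_F(ω)`. -/
theorem binary_coding_limit
    {Ω : Type*} [MeasurableSpace Ω] (ℙ : Measure Ω) [IsProbabilityMeasure ℙ]
    (σ : Ω → Ω) (hσ : MeasurePreserving σ ℙ ℙ)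
    (F : Ω → ℝ → ℝ) (hmeas : Measurable (Function.uncurry F))
    (hmono : ∀ ω, StrictMono (F ω)) (hcont : ∀ ω, Continuous (F ω))
    (hsurj : ∀ ω, Function.Surjective (F ω))
    (hdeg : ∀ ω (x : ℝ), F ω (x + 1) = F ω x + 1)
    (hstd : ∀ ω, F ω 0 ∈ Set.Ico (0 : ℝ) 1)
    (c : Ω → ℝ)
    (hc : ∀ ω, c ω ∈ Set.Ico (0 : ℝ) 1 ∧ Int.fract (F ω (c ω)) = 0)
    (x₀ : ℝ) (hx₀ : x₀ ∈ Set.Ico (0 : ℝ) 1)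
    (ρ : Ω → ℝ)
    (hρ : ∀ᵐ ω ∂ℙ, Tendsto (fun n : ℕ => (iterLift σ F n ω x₀ - x₀) / n)
      atTop (𝓝 (ρ ω))) :
    ∀ᵐ ω ∂ℙ, Tendsto (fun n : ℕ => binFreq σ F c n ω x₀) atTop (𝓝 (ρ ω)) := by
  filter_upwards [hρ] with ω hω
  set L : ℕ → ℝ := fun n => iterLift σ F n ω x₀ with hL
  have hbin : ∀ n : ℕ, binFreq σ F c n ω x₀ = (⌊L n⌋ : ℝ) / n := by
    intro n
    unfold binFreq
    rw [sum_eq_floor σ F hmono hdeg hstd c hc n ω x₀ hx₀]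
  have herr : Tendsto (fun n : ℕ => ((⌊L n⌋ : ℝ) - L n + x₀) / n) atTop (𝓝 0) := by
    apply squeeze_zero_norm' (a := fun n : ℕ => (1 + |x₀|) / n)
      ?_ (tendsto_const_div_atTop_nhds_zero_nat _)
    filter_upwards [eventually_ge_atTop 1] with n hn
    have hnpos : (0:ℝ) < n := by exact_mod_cast hn
    rw [norm_div, Real.norm_natCast]
    gcongr
    have hfr : (⌊L n⌋ : ℝ) - L n = -Int.fract (L n) := by rw [Int.fract]; ring
    have h1 : |(⌊L n⌋ : ℝ) - L n| ≤ 1 := by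
      rw [hfr, abs_neg, abs_of_nonneg (Int.fract_nonneg _)]
      exact (Int.fract_lt_one _).le
    calc |(⌊L n⌋ : ℝ) - L n + x₀| ≤ |(⌊L n⌋ : ℝ) - L n| + |x₀| := abs_add_le _ _
      _ ≤ 1 + |x₀| := by linarith
  have : Tendsto (fun n : ℕ => (L n - x₀) / n + ((⌊L n⌋ : ℝ) - L n + x₀) / n)
      atTop (𝓝 (ρ ω + 0)) := hω.add herr
  rw [add_zero] at this
  refine this.congr fun n => ?_
  rw [hbin n, ← add_div]
  congr 1
  ring
end

section
/- Let (Ω, ℱ, ℙ, σ) be a measure-preserving dynamical system, let f : Ω → ℋ be the generator of a random circle homeomorphism such that f_ω has no fixed point for every ω ∈ Ω, and let F be the standard lift of f. Fix x₀ ∈ S¹ and suppose that for ℙ-almost every ω ∈ Ω the random rotation number ρ_F(ω) = lim_{n→∞} (F^(n)_ω(x₀') − x₀')/n exists, where x₀' ∈ [0,1) represents x₀. Then for every z ∈ S¹ and ℙ-almost every ω ∈ Ω, lim_{n→∞} V_f(n, ω, x₀, z) = ρ_F(ω). -/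
open MeasureTheory

/-- Membership of `x` in the positively oriented circular arc `[z, y)`, with all points
represented in `[0,1)`; `[z, z) = ∅`. -/
def inArc (z y x : ℝ) : Prop :=
  if z ≤ y then z ≤ x ∧ x < y else (z ≤ x ∨ x < y)

open Classical in
/-- The `n`-th visit frequency
`V_f(n, ω, x₀, z) = (1/n) #{1 ≤ i ≤ n : f^{(i)}_ω(x₀) ∈ [z, f_{σ^{i-1}ω}(z))}`,
with circle points represented in `[0,1)` and `f_ω = Int.fract ∘ F_ω` on `[0,1)`. -/
noncomputable def visitFreq {Ω : Type*} (σ : Ω → Ω) (F : Ω → ℝ → ℝ)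
    (n : ℕ) (ω : Ω) (x₀ z : ℝ) : ℝ :=
  (((Finset.Icc 1 n).filter fun i =>
      inArc z (Int.fract (F (σ^[i - 1] ω) z)) (iterHat σ F i ω x₀)).card : ℝ) / n

open Filter Topology

section Aux
variable {Ω : Type*} (σ : Ω → Ω) (F : Ω → ℝ → ℝ)

lemma iterLift_succ' (n : ℕ) (ω : Ω) (x : ℝ) :
    iterLift σ F (n + 1) ω x = F (σ^[n] ω) (iterLift σ F n ω x) := by
  induction n generalizing ω x with
  | zero => rfl
  | succ n ih =>
    have h1 : iterLift σ F (n + 2) ω x = iterLift σ F (n + 1) (σ ω) (F ω x) := rfl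
    rw [h1, ih, Function.iterate_succ_apply]
    rfl

lemma F_add_int (hdeg : ∀ ω (x : ℝ), F ω (x + 1) = F ω x + 1) (ω : Ω) (x : ℝ) (m : ℤ) :
    F ω (x + m) = F ω x + m := by
  induction m using Int.induction_on with
  | zero => simp
  | succ k ih =>
    push_cast at ih ⊢
    rw [← add_assoc, hdeg]
    rw [ih, add_assoc]
  | pred k ih =>
    push_cast at ih ⊢
    have h := hdeg ω (x + (-(k:ℝ) - 1))
    have h2 : x + (-(k:ℝ) - 1) + 1 = x + -(k:ℝ) := by ring
    rw [h2] at h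
    have : F ω (x + (-(k:ℝ) - 1)) = F ω x + -(k:ℝ) - 1 := by linarith
    linarith [this]

lemma iterHat_eq_fract (hdeg : ∀ ω (x : ℝ), F ω (x + 1) = F ω x + 1)
    (n : ℕ) (ω : Ω) (x : ℝ) :
    iterHat σ F n ω (Int.fract x) = Int.fract (iterLift σ F n ω x) := by
  induction n generalizing ω x with
  | zero => rfl
  | succ n ih =>
    show iterHat σ F n (σ ω) (Int.fract (F ω (Int.fract x))) = _
    have h1 : F ω (Int.fract x) = F ω x + ((-⌊x⌋ : ℤ) : ℝ) := by
      rw [← F_add_int F hdeg ω x (-⌊x⌋)]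
      congr 1
      push_cast
      rw [Int.fract]; ring
    rw [h1, Int.fract_add_intCast, ih]
    rfl

lemma disp (hdeg : ∀ ω (x : ℝ), F ω (x + 1) = F ω x + 1)
    (hcont : ∀ ω, Continuous (F ω))
    (hstd : ∀ ω, F ω 0 ∈ Set.Ico (0 : ℝ) 1)
    (hnofix : ∀ ω, ∀ x ∈ Set.Ico (0 : ℝ) 1, Int.fract (F ω x) ≠ x)
    (ω : Ω) (x : ℝ) : x < F ω x ∧ F ω x < x + 1 := by
  have hni : ∀ y : ℝ, ∀ k : ℤ, F ω y - y ≠ (k : ℝ) := by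
    intro y k hk
    have hfl : Int.fract y + (⌊y⌋ : ℝ) = y := Int.fract_add_floor y
    have h1 : F ω (Int.fract y + (⌊y⌋ : ℤ)) = F ω (Int.fract y) + ⌊y⌋ :=
      F_add_int F hdeg ω _ _
    rw [show ((⌊y⌋ : ℤ) : ℝ) = (⌊y⌋ : ℝ) from rfl, hfl] at h1
    have h2 : F ω (Int.fract y) = Int.fract y + k := by
      have : F ω y = y + k := by linarith [sub_eq_iff_eq_add.mp hk]
      linarith
    have h3 : Int.fract (F ω (Int.fract y)) = Int.fract y := by
      rw [h2, Int.fract_add_intCast, Int.fract_fract]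
    exact hnofix ω (Int.fract y) ⟨Int.fract_nonneg y, Int.fract_lt_one y⟩ h3
  have hg : Continuous fun y : ℝ => F ω y - y := (hcont ω).sub continuous_id
  have h00 : 0 < F ω 0 - 0 := by
    have h1 := (hstd ω).1
    have h2 := hni 0 0
    simp only [Int.cast_zero] at h2
    rcases lt_or_eq_of_le h1 with h | h
    · linarith
    · exfalso; apply h2; linarith
  have h01 : F ω 0 - 0 < 1 := by have := (hstd ω).2; linarith
  constructor
  · by_contra h
    push_neg at h
    have hmem : (0 : ℝ) ∈ Set.uIcc ((fun y : ℝ => F ω y - y) x) ((fun y : ℝ => F ω y - y) 0) :=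
      Set.mem_uIcc.mpr (Or.inl ⟨by simpa using by linarith, by simpa using le_of_lt h00⟩)
    obtain ⟨y, -, hy⟩ := intermediate_value_uIcc hg.continuousOn hmem
    exact hni y 0 (by simpa using hy)
  · by_contra h
    push_neg at h
    have hmem : (1 : ℝ) ∈ Set.uIcc ((fun y : ℝ => F ω y - y) 0) ((fun y : ℝ => F ω y - y) x) :=
      Set.mem_uIcc.mpr (Or.inl ⟨by simpa using le_of_lt h01, by simpa using by linarith⟩)
    obtain ⟨y, -, hy⟩ := intermediate_value_uIcc hg.continuousOn hmem
    exact hni y 1 (by simpa using hy)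

end Aux

lemma arc_iff (z : ℝ) (hz0 : 0 ≤ z) (hz1 : z < 1) (L Y : ℝ)
    (hL1 : z < L) (hL2 : L < z + 1) :
    inArc z (Int.fract L) (Int.fract Y) ↔ ∃ m : ℤ, z + m ≤ Y ∧ Y < L + m := by
  have hfY := Int.fract_add_floor Y
  have hfY0 := Int.fract_nonneg Y
  have hfY1 := Int.fract_lt_one Y
  rcases lt_or_ge L 1 with hcase | hcase
  · have hfL : Int.fract L = L := Int.fract_eq_self.mpr ⟨by linarith, hcase⟩
    rw [inArc, hfL, if_pos (le_of_lt hL1)]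
    constructor
    · rintro ⟨h1, h2⟩
      exact ⟨⌊Y⌋, by linarith, by linarith⟩
    · rintro ⟨m, h1, h2⟩
      have hY : Int.fract Y = Y - m := by
        rw [← Int.fract_sub_intCast Y m]
        exact Int.fract_eq_self.mpr ⟨by linarith, by linarith⟩
      constructor <;> linarith [hY]
  · have hfL : Int.fract L = L - 1 := by
      rw [← Int.fract_sub_intCast L 1]
      push_cast
      exact Int.fract_eq_self.mpr ⟨by linarith, by linarith⟩
    have hne : ¬ (z ≤ Int.fract L) := by rw [hfL]; push_neg; linarith
    rw [inArc, if_neg hne, hfL]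
    constructor
    · rintro (h | h)
      · exact ⟨⌊Y⌋, by linarith, by linarith⟩
      · exact ⟨⌊Y⌋ - 1, by push_cast; linarith, by push_cast; linarith⟩
    · rintro ⟨m, h1, h2⟩
      rcases lt_or_ge (Y - m) 1 with hy | hy
      · left
        have hY : Int.fract Y = Y - m := by
          rw [← Int.fract_sub_intCast Y m]
          exact Int.fract_eq_self.mpr ⟨by linarith, hy⟩
        linarith
      · right
        have hY : Int.fract Y = Y - m - 1 := by
          rw [← Int.fract_sub_intCast Y (m + 1)]
          have harg : Y - ((m + 1 : ℤ) : ℝ) = Y - m - 1 := by push_cast; ring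
          rw [harg]
          exact Int.fract_eq_self.mpr ⟨by linarith, by linarith⟩
        linarith

lemma exists_int_iff_floor (a b : ℝ) :
    (∃ m : ℤ, a < m ∧ (m : ℝ) ≤ b) ↔ ⌊a⌋ < ⌊b⌋ := by
  constructor
  · rintro ⟨m, h1, h2⟩
    have h3 : ⌊a⌋ < m := Int.floor_lt.mpr h1
    have h4 : m ≤ ⌊b⌋ := Int.le_floor.mpr h2
    omega
  · intro h
    refine ⟨⌊b⌋, ?_, Int.floor_le b⟩
    have h1 : a < (⌊a⌋ : ℝ) + 1 := Int.lt_floor_add_one a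
    have h2 : ((⌊a⌋ : ℤ) : ℝ) + 1 ≤ (⌊b⌋ : ℝ) := by exact_mod_cast Int.add_one_le_iff.mpr h
    linarith

lemma count_lemma (P : ℕ → Prop) [DecidablePred P] (a : ℕ → ℤ)
    (hstep : ∀ n : ℕ, (P (n + 1) ↔ a (n + 1) = a n + 1) ∧ (a (n + 1) = a n ∨ a (n + 1) = a n + 1)) :
    ∀ n : ℕ, (((Finset.Icc 1 n).filter P).card : ℤ) = a n - a 0 := by
  intro n
  induction n with
  | zero => simp
  | succ n ih =>
    have hins : Finset.Icc 1 (n + 1) = insert (n + 1) (Finset.Icc 1 n) := by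
      ext i
      simp [Finset.mem_Icc, Finset.mem_insert]
      omega
    rw [hins, Finset.filter_insert]
    by_cases h : P (n + 1)
    · rw [if_pos h, Finset.card_insert_of_notMem (by simp)]
      have h1 := (hstep n).1.mp h
      push_cast
      omega
    · rw [if_neg h]
      have h1 : a (n + 1) = a n := by
        rcases (hstep n).2 with h2 | h2
        · exact h2
        · exact absurd ((hstep n).1.mpr h2) h
      omega


/-- let `F` be the standard lift of the generator `f` of a random circle
homeomorphism over a measure-preserving system, where each `f_ω` has no fixed point
(i.e. `f̂_ω(x) ≠ x` for all `x ∈ [0,1)`).  Fix `x₀ ∈ [0,1)` (representing `x₀ ∈ S¹`) and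
suppose that for ℙ-almost every `ω` the random rotation number
`ρ_F(ω) = lim_n (F^{(n)}_ω(x₀) − x₀)/n` exists.  Then for every `z ∈ S¹` (represented in
`[0,1)`) and ℙ-almost every `ω`, `lim_n V_f(n, ω, x₀, z) = ρ_F(ω)`. -/
theorem visit_counting_limit
    {Ω : Type*} [MeasurableSpace Ω] (ℙ : Measure Ω) [IsProbabilityMeasure ℙ]
    (σ : Ω → Ω) (hσ : MeasurePreserving σ ℙ ℙ)
    (F : Ω → ℝ → ℝ) (hmeas : Measurable (Function.uncurry F))
    (hmono : ∀ ω, StrictMono (F ω)) (hcont : ∀ ω, Continuous (F ω))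
    (hsurj : ∀ ω, Function.Surjective (F ω))
    (hdeg : ∀ ω (x : ℝ), F ω (x + 1) = F ω x + 1)
    (hstd : ∀ ω, F ω 0 ∈ Set.Ico (0 : ℝ) 1)
    (hnofix : ∀ ω, ∀ x ∈ Set.Ico (0 : ℝ) 1, Int.fract (F ω x) ≠ x)
    (x₀ : ℝ) (hx₀ : x₀ ∈ Set.Ico (0 : ℝ) 1)
    (ρ : Ω → ℝ)
    (hρ : ∀ᵐ ω ∂ℙ, Tendsto (fun n : ℕ => (iterLift σ F n ω x₀ - x₀) / n)
      atTop (𝓝 (ρ ω))) :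
    ∀ z ∈ Set.Ico (0 : ℝ) 1,
      ∀ᵐ ω ∂ℙ, Tendsto (fun n : ℕ => visitFreq σ F n ω x₀ z) atTop (𝓝 (ρ ω)) := by
  intro z hz
  obtain ⟨hz0, hz1⟩ := hz
  obtain ⟨hx0, hx1⟩ := hx₀
  filter_upwards [hρ] with ω hω
  classical
  set X : ℕ → ℝ := fun n => iterLift σ F n ω x₀ with hXdef
  set a : ℕ → ℤ := fun n => ⌊X n - z⌋ with hadef
  have hdisp := disp F hdeg hcont hstd hnofix
  -- step characterization
  have hstep : ∀ n : ℕ,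
      ((fun i => inArc z (Int.fract (F (σ^[i - 1] ω) z)) (iterHat σ F i ω x₀)) (n + 1)
        ↔ a (n + 1) = a n + 1) ∧ (a (n + 1) = a n ∨ a (n + 1) = a n + 1) := by
    intro n
    have hXs : X (n + 1) = F (σ^[n] ω) (X n) := iterLift_succ' σ F n ω x₀
    have hd := hdisp (σ^[n] ω) (X n)
    have hdz := hdisp (σ^[n] ω) z
    have hb1 : a n ≤ a (n + 1) := Int.floor_le_floor (by rw [hXs]; linarith)
    have hb2 : a (n + 1) ≤ a n + 1 := by
      have : X (n + 1) - z ≤ (X n - z) + 1 := by rw [hXs]; linarith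
      calc a (n + 1) ≤ ⌊(X n - z) + 1⌋ := Int.floor_le_floor this
        _ = a n + 1 := by rw [Int.floor_add_one]
    have hiff : inArc z (Int.fract (F (σ^[n + 1 - 1] ω) z)) (iterHat σ F (n + 1) ω x₀)
        ↔ a n < a (n + 1) := by
      have hsimp : n + 1 - 1 = n := rfl
      rw [hsimp]
      have hhat : iterHat σ F (n + 1) ω x₀ = Int.fract (X (n + 1)) := by
        have hfx : Int.fract x₀ = x₀ := Int.fract_eq_self.mpr ⟨hx0, hx1⟩
        rw [← hfx]
        exact iterHat_eq_fract σ F hdeg (n + 1) ω x₀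
      rw [hhat, arc_iff z hz0 hz1 (F (σ^[n] ω) z) (X (n + 1)) hdz.1 hdz.2]
      have hconv : ∀ m : ℤ, (z + m ≤ X (n + 1) ∧ X (n + 1) < F (σ^[n] ω) z + m)
          ↔ (X n - z < m ∧ (m : ℝ) ≤ X (n + 1) - z) := by
        intro m
        have h1 : F (σ^[n] ω) z + (m : ℝ) = F (σ^[n] ω) (z + m) :=
          (F_add_int F hdeg (σ^[n] ω) z m).symm
        constructor
        · rintro ⟨ha, hb⟩
          refine ⟨?_, by linarith⟩
          rw [h1, hXs] at hb
          have := (hmono (σ^[n] ω)).lt_iff_lt.mp hb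
          linarith
        · rintro ⟨ha, hb⟩
          refine ⟨by linarith, ?_⟩
          rw [h1, hXs]
          exact (hmono (σ^[n] ω)).lt_iff_lt.mpr (by linarith)
      constructor
      · rintro ⟨m, hm⟩
        exact (exists_int_iff_floor (X n - z) (X (n + 1) - z)).mp ⟨m, (hconv m).mp hm⟩
      · intro h
        obtain ⟨m, hm⟩ := (exists_int_iff_floor (X n - z) (X (n + 1) - z)).mpr h
        exact ⟨m, (hconv m).mpr hm⟩
    constructor
    · show inArc z (Int.fract (F (σ^[n + 1 - 1] ω) z)) (iterHat σ F (n + 1) ω x₀)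
        ↔ a (n + 1) = a n + 1
      rw [hiff]
      omega
    · omega
  have hcount := count_lemma
    (fun i => inArc z (Int.fract (F (σ^[i - 1] ω) z)) (iterHat σ F i ω x₀)) a hstep
  have hvf : ∀ n : ℕ, visitFreq σ F n ω x₀ z = ((a n - a 0 : ℤ) : ℝ) / n := by
    intro n
    rw [visitFreq]
    congr 1
    exact_mod_cast hcount n
  have hX0 : X 0 = x₀ := rfl
  -- limit
  have h1 : Tendsto (fun n : ℕ => (X n - x₀) / n) atTop (𝓝 (ρ ω)) := hω
  have h2 : Tendsto (fun n : ℕ => ((a n - a 0 : ℤ) : ℝ) / n - (X n - x₀) / n) atTop (𝓝 0) := by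
    refine squeeze_zero_norm' (a := fun n : ℕ => 3 / (n : ℝ)) ?_
      (tendsto_const_div_atTop_nhds_zero_nat 3)
    · filter_upwards [eventually_ge_atTop 1] with n hn
      have hnpos : (0 : ℝ) < n := by exact_mod_cast hn
      have hfl1 : (a n : ℝ) ≤ X n - z := Int.floor_le _
      have hfl2 : X n - z < (a n : ℝ) + 1 := Int.lt_floor_add_one _
      have hfl3 : (a 0 : ℝ) ≤ X 0 - z := Int.floor_le _
      have hfl4 : X 0 - z < (a 0 : ℝ) + 1 := Int.lt_floor_add_one _
      rw [hX0] at hfl3 hfl4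
      have hnum : |((a n - a 0 : ℤ) : ℝ) - (X n - x₀)| ≤ 3 := by
        rw [abs_le]
        push_cast
        constructor <;> linarith
      have heq : ((a n - a 0 : ℤ) : ℝ) / n - (X n - x₀) / n
          = (((a n - a 0 : ℤ) : ℝ) - (X n - x₀)) / n := by ring
      rw [heq]
      rw [Real.norm_eq_abs, abs_div, abs_of_pos hnpos]
      gcongr
  have h3 := h1.add h2
  rw [add_zero] at h3
  have heq : (fun n : ℕ => (X n - x₀) / n + (((a n - a 0 : ℤ) : ℝ) / n - (X n - x₀) / n))
      = fun n : ℕ => ((a n - a 0 : ℤ) : ℝ) / n := by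
    funext n; ring
  rw [heq] at h3
  exact h3.congr fun n => (hvf n).symm
end

section
/- Let (Ω, ℱ, ℙ, σ) be a measure-preserving dynamical system, let f : Ω → ℋ generate a random circle homeomorphism, and let F be its standard lift. Then for every ω ∈ Ω, x ∈ ℝ and n ≥ 1, F^(n)_ω(x) = f̂^(n)_ω({x}) + Σ_{k=0}^{n−1} S_{σ^k ω}(f̂^(k)_ω({x})) + ⌊x⌋, where {x} = x − ⌊x⌋. -/
open MeasureTheory

/-- for the standard lift `F` of the generator of a random circle
homeomorphism over a measure-preserving system, for every `ω`, `x : ℝ` and `n ≥ 1`,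
`F^{(n)}_ω(x) = f̂^{(n)}_ω({x}) + ∑_{k=0}^{n-1} S_{σ^k ω}(f̂^{(k)}_ω({x})) + ⌊x⌋`. -/
theorem standard_lift_iterate_decomposition
    {Ω : Type*} [MeasurableSpace Ω] (ℙ : MeasureTheory.Measure Ω)
    [MeasureTheory.IsProbabilityMeasure ℙ]
    (σ : Ω → Ω) (hσ : MeasureTheory.MeasurePreserving σ ℙ ℙ)
    (F : Ω → ℝ → ℝ) (hmeas : Measurable (Function.uncurry F))
    (hmono : ∀ ω, StrictMono (F ω)) (hcont : ∀ ω, Continuous (F ω))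
    (hsurj : ∀ ω, Function.Surjective (F ω))
    (hdeg : ∀ ω (x : ℝ), F ω (x + 1) = F ω x + 1)
    (hstd : ∀ ω, F ω 0 ∈ Set.Ico (0 : ℝ) 1)
    (c : Ω → ℝ)
    (hc : ∀ ω, c ω ∈ Set.Ico (0 : ℝ) 1 ∧ Int.fract (F ω (c ω)) = 0) :
    ∀ (ω : Ω) (x : ℝ) (n : ℕ), 1 ≤ n →
      iterLift σ F n ω x = iterHat σ F n ω (Int.fract x)
        + (∑ k ∈ Finset.range n, rightInd F c (σ^[k] ω) (iterHat σ F k ω (Int.fract x)))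
        + ⌊x⌋ := by
  classical
  -- the function `x ↦ F ω x - x` is periodic with period 1
  have hper : ∀ ω : Ω, Function.Periodic (fun x => F ω x - x) 1 := by
    intro ω x
    simp only [hdeg ω x]
    ring
  have hshift : ∀ (ω : Ω) (x : ℝ), F ω x = F ω (Int.fract x) + ⌊x⌋ := by
    intro ω x
    have h := (hper ω).sub_int_mul_eq (x := x) ⌊x⌋
    simp only [mul_one] at h
    have hx : x - (⌊x⌋ : ℝ) = Int.fract x := by rw [Int.fract]
    rw [hx] at h
    have : F ω (Int.fract x) - Int.fract x = F ω x - x := h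
    rw [Int.fract] at this
    linarith
  -- the key floor computation on [0,1)
  have hfloor : ∀ (ω : Ω) (y : ℝ), y ∈ Set.Ico (0 : ℝ) 1 →
      ((⌊F ω y⌋ : ℝ)) = rightInd F c ω y := by
    intro ω y hy
    obtain ⟨hy0, hy1⟩ := hy
    have hF0 := hstd ω
    have hF1 : F ω 1 = F ω 0 + 1 := by
      have := hdeg ω 0; simpa using this
    by_cases h0 : Int.fract (F ω 0) = 0
    · -- then F ω 0 = 0 and F ω y ∈ [0,1)
      have hF00 : F ω 0 = 0 := by
        rw [Int.fract_eq_self.2 hF0] at h0; exact h0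
      have h1 : F ω y < 1 := by
        have := (hmono ω) hy1
        rw [hF1, hF00] at this; linarith
      have h2 : 0 ≤ F ω y := by
        have := (hmono ω).monotone hy0
        rw [hF00] at this; linarith
      have : ⌊F ω y⌋ = 0 := Int.floor_eq_zero_iff.2 ⟨h2, h1⟩
      rw [this, rightInd]
      simp [h0]
    · -- then F ω (c ω) = 1
      have hF0pos : 0 < F ω 0 := by
        rcases lt_or_eq_of_le hF0.1 with h | h
        · exact h
        · exfalso; apply h0; rw [Int.fract_eq_self.2 hF0, ← h]
      obtain ⟨⟨hc0, hc1⟩, hcf⟩ := hc ω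
      have hFc1 : F ω (c ω) = 1 := by
        have hlow : F ω 0 ≤ F ω (c ω) := (hmono ω).monotone hc0
        have hhigh : F ω (c ω) < F ω 0 + 1 := by
          have := (hmono ω) hc1; rw [hF1] at this; exact this
        have hint : F ω (c ω) = (⌊F ω (c ω)⌋ : ℝ) := by
          have := Int.fract_add_floor (F ω (c ω))
          rw [hcf] at this; linarith
        have h1 : (0 : ℝ) < (⌊F ω (c ω)⌋ : ℝ) := by rw [← hint]; linarith
        have h2 : ((⌊F ω (c ω)⌋ : ℝ)) < 2 := by rw [← hint]; linarith [hF0.2]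
        have h1' : (0 : ℤ) < ⌊F ω (c ω)⌋ := by exact_mod_cast h1
        have h2' : ⌊F ω (c ω)⌋ < 2 := by exact_mod_cast h2
        have : ⌊F ω (c ω)⌋ = 1 := by omega
        rw [hint, this]; norm_num
      by_cases hyc : c ω ≤ y
      · have h1 : (1 : ℝ) ≤ F ω y := by
          have := (hmono ω).monotone hyc; rw [hFc1] at this; exact this
        have h2 : F ω y < 2 := by
          have := (hmono ω) hy1; rw [hF1] at this; linarith [hF0.2]
        have : ⌊F ω y⌋ = 1 := by
          have h := Int.floor_eq_iff (z := 1) (a := F ω y)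
          rw [h]
          refine ⟨by push_cast; linarith, by push_cast; linarith⟩
        rw [this, rightInd]
        simp only [h0, if_pos, ne_eq, not_false_eq_true, if_true]
        rw [Set.indicator_of_mem (Set.mem_Ico.mpr ⟨hyc, hy1⟩)]
        norm_num
      · push_neg at hyc
        have h1 : F ω y < 1 := by
          have := (hmono ω) hyc; rw [hFc1] at this; exact this
        have h2 : 0 ≤ F ω y := by
          have := (hmono ω).monotone hy0; linarith
        have : ⌊F ω y⌋ = 0 := Int.floor_eq_zero_iff.2 ⟨h2, h1⟩
        rw [this, rightInd]
        simp only [h0, if_pos, ne_eq, not_false_eq_true, if_true]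
        rw [Set.indicator_of_notMem (by intro h; exact absurd h.1 (not_le.2 hyc))]
        norm_num
  -- one-step decomposition
  have hstep : ∀ (ω : Ω) (x : ℝ),
      F ω x = Int.fract (F ω (Int.fract x)) + rightInd F c ω (Int.fract x) + ⌊x⌋ := by
    intro ω x
    have h1 := hshift ω x
    have h2 : F ω (Int.fract x) = Int.fract (F ω (Int.fract x)) + (⌊F ω (Int.fract x)⌋ : ℝ) :=
      (Int.fract_add_floor _).symm
    have h3 := hfloor ω (Int.fract x) ⟨Int.fract_nonneg x, Int.fract_lt_one x⟩
    linarith [h1, h2, h3]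
  have hfr : ∀ (ω : Ω) (x : ℝ), Int.fract (F ω x) = Int.fract (F ω (Int.fract x)) := by
    intro ω x
    rw [hshift ω x, Int.fract_add_intCast]
  have hfl : ∀ (ω : Ω) (x : ℝ), ((⌊F ω x⌋ : ℝ)) = rightInd F c ω (Int.fract x) + ⌊x⌋ := by
    intro ω x
    rw [hshift ω x]
    push_cast [Int.floor_add_intCast]
    rw [hfloor ω (Int.fract x) ⟨Int.fract_nonneg x, Int.fract_lt_one x⟩]
  intro ω x n hn
  induction n, hn using Nat.le_induction generalizing ω x with
  | base =>
    show iterLift σ F 0 (σ ω) (F ω x) = _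
    simp only [iterLift, iterHat, Finset.range_one, Finset.sum_singleton,
      Function.iterate_zero, id_eq]
    exact hstep ω x
  | succ n hn ih =>
    show iterLift σ F n (σ ω) (F ω x) = _
    rw [ih (σ ω) (F ω x)]
    have hsum : ∑ k ∈ Finset.range (n + 1),
        rightInd F c (σ^[k] ω) (iterHat σ F k ω (Int.fract x))
        = (∑ k ∈ Finset.range n,
            rightInd F c (σ^[k] (σ ω)) (iterHat σ F k (σ ω) (Int.fract (F ω x))))
          + rightInd F c ω (Int.fract x) := by
      have key : ∀ k, iterHat σ F (k + 1) ω (Int.fract x)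
          = iterHat σ F k (σ ω) (Int.fract (F ω x)) := by
        intro k
        show iterHat σ F k (σ ω) (Int.fract (F ω (Int.fract x))) = _
        rw [hfr ω x]
      rw [Finset.sum_range_succ']
      congr 1
      · apply Finset.sum_congr rfl
        intro k _
        rw [Function.iterate_succ_apply, key k]
    rw [hsum]
    have hhat : iterHat σ F (n + 1) ω (Int.fract x)
        = iterHat σ F n (σ ω) (Int.fract (F ω x)) := by
      show iterHat σ F n (σ ω) (Int.fract (F ω (Int.fract x))) = _
      rw [hfr ω x]
    rw [hhat, hfl ω x]
    push_cast
    ring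
end

section
/- Let (Ω, ℱ, ℙ, σ) be a measure-preserving dynamical system and let F be an integrable lift of a random circle homeomorphism, i.e. ∫_Ω sup_{x∈ℝ} |F_ω(x) − x| dℙ(ω) < ∞. Define R_n = ∫_Ω F^(n)_ω(0) dℙ(ω) for n ≥ 1. Then for all n, m ≥ 1, |R_{n+m} − R_n − R_m| ≤ 1. -/
open MeasureTheory

lemma iterLift_comp {Ω : Type*} (σ : Ω → Ω) (F : Ω → ℝ → ℝ) :
    ∀ (n m : ℕ) (ω : Ω) (x : ℝ),
      iterLift σ F (n + m) ω x = iterLift σ F m (σ^[n] ω) (iterLift σ F n ω x)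
  | 0, m, ω, x => by simp [iterLift]
  | n + 1, m, ω, x => by
    have h : n + 1 + m = (n + m) + 1 := by ring
    rw [h]
    show iterLift σ F (n + m) (σ ω) (F ω x) = _
    rw [iterLift_comp σ F n m (σ ω) (F ω x)]
    rw [Function.iterate_succ_apply]
    rfl

lemma shift_int {G : ℝ → ℝ} (hG : ∀ x, G (x + 1) = G x + 1) :
    ∀ (k : ℤ) (x : ℝ), G (x + k) = G x + k := by
  intro k
  induction k using Int.induction_on with
  | zero => simp
  | succ n ih =>
    intro x
    have h1 := hG (x + n)
    have h2 := ih x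
    push_cast at *
    rw [show x + (n + 1) = x + n + 1 by ring, h1, h2]
    ring
  | pred n ih =>
    intro x
    have h1 := hG (x - (n + 1))
    have h2 := ih (x - 1)
    push_cast at *
    rw [show x + (-n - 1) = (x - 1) + (-n : ℝ) by ring, h2]
    have : G (x - 1) = G x - 1 := by
      have := hG (x - 1)
      rw [show x - 1 + 1 = x by ring] at this
      linarith
    rw [this]; ring

lemma lift_disp_bound {G : ℝ → ℝ} (hmono : Monotone G)
    (hG : ∀ x, G (x + 1) = G x + 1) (x : ℝ) : |G x - x - G 0| ≤ 1 := by
  have hsh := shift_int hG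
  have h1 : (⌊x⌋ : ℝ) ≤ x := Int.floor_le x
  have h2 : x ≤ (⌊x⌋ : ℝ) + 1 := (Int.lt_floor_add_one x).le
  have hk : G (⌊x⌋ : ℝ) = G 0 + ⌊x⌋ := by simpa using hsh ⌊x⌋ 0
  have hk1 : G ((⌊x⌋ : ℝ) + 1) = G 0 + ⌊x⌋ + 1 := by
    have := hsh (⌊x⌋ + 1) 0
    push_cast at this
    simpa [add_assoc] using this
  have l1 : G 0 + ⌊x⌋ ≤ G x := hk ▸ hmono h1
  have l2 : G x ≤ G 0 + ⌊x⌋ + 1 := hk1 ▸ hmono h2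
  rw [abs_le]
  constructor <;> linarith

/-- let `F` be an integrable lift of a random circle homeomorphism over a
measure-preserving system, i.e. `∫ sup_x |F_ω(x) − x| dℙ(ω) < ∞`, and set
`R_n = ∫ F^{(n)}_ω(0) dℙ(ω)`.  Then `|R_{n+m} − R_n − R_m| ≤ 1` for all `n, m ≥ 1`. -/
theorem Rn_quasi_additive
    {Ω : Type*} [MeasurableSpace Ω] (ℙ : Measure Ω) [IsProbabilityMeasure ℙ]
    (σ : Ω → Ω) (hσ : MeasurePreserving σ ℙ ℙ)
    (F : Ω → ℝ → ℝ) (hmeas : Measurable (Function.uncurry F))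
    (hmono : ∀ ω, StrictMono (F ω)) (hcont : ∀ ω, Continuous (F ω))
    (hsurj : ∀ ω, Function.Surjective (F ω))
    (hdeg : ∀ ω (x : ℝ), F ω (x + 1) = F ω x + 1)
    (hint : Integrable (fun ω => ⨆ x : ℝ, |F ω x - x|) ℙ) :
    ∀ n m : ℕ, 1 ≤ n → 1 ≤ m →
      |(∫ ω, iterLift σ F (n + m) ω 0 ∂ℙ) - (∫ ω, iterLift σ F n ω 0 ∂ℙ)
        - (∫ ω, iterLift σ F m ω 0 ∂ℙ)| ≤ 1 := by
  -- degree-one property of iterates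
  have hdegN : ∀ (n : ℕ) ω (x : ℝ), iterLift σ F n ω (x + 1) = iterLift σ F n ω x + 1 := by
    intro n
    induction n with
    | zero => intro ω x; rfl
    | succ n ih =>
      intro ω x
      show iterLift σ F n (σ ω) (F ω (x + 1)) = iterLift σ F n (σ ω) (F ω x) + 1
      rw [hdeg, ih]
  -- monotonicity of iterates
  have hmonoN : ∀ (n : ℕ) ω, Monotone (iterLift σ F n ω) := by
    intro n
    induction n with
    | zero => intro ω; exact monotone_id
    | succ n ih =>
      intro ω a b hab
      exact ih (σ ω) ((hmono ω).monotone hab)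
  -- measurability
  have hσm := hσ.measurable
  have hmeasN : ∀ n : ℕ, Measurable (Function.uncurry (iterLift σ F n)) := by
    intro n
    induction n with
    | zero => exact measurable_snd
    | succ n ih =>
      have heq : Function.uncurry (iterLift σ F (n + 1)) =
          Function.uncurry (iterLift σ F n) ∘ (fun p : Ω × ℝ => (σ p.1, F p.1 p.2)) := rfl
      rw [heq]
      exact ih.comp ((hσm.comp measurable_fst).prodMk hmeas)
  have hmeas0 : ∀ n : ℕ, Measurable (fun ω => iterLift σ F n ω 0) := fun n =>
    (hmeasN n).comp (measurable_id.prodMk measurable_const)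
  -- displacement sup
  set S : Ω → ℝ := fun ω => ⨆ x : ℝ, |F ω x - x| with hSdef
  have hFshift : ∀ ω (k : ℤ) (x : ℝ), F ω (x + k) = F ω x + k := fun ω => shift_int (hdeg ω)
  have hbdd : ∀ ω, BddAbove (Set.range fun x : ℝ => |F ω x - x|) := by
    intro ω
    have hc : ContinuousOn (fun x : ℝ => |F ω x - x|) (Set.Icc 0 1) :=
      (((hcont ω).sub continuous_id).abs).continuousOn
    obtain ⟨C, hC⟩ := (isCompact_Icc.image_of_continuousOn hc).bddAbove
    refine ⟨C, ?_⟩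
    rintro y ⟨x, rfl⟩
    have hx : F ω x - x = F ω (Int.fract x) - Int.fract x := by
      have h1 := hFshift ω ⌊x⌋ (Int.fract x)
      rw [Int.fract_add_floor] at h1
      rw [h1]
      have := Int.fract_add_floor x
      linarith [Int.fract_add_floor x]
    show |F ω x - x| ≤ C
    rw [hx]
    exact hC ⟨Int.fract x, ⟨Int.fract_nonneg x, (Int.fract_lt_one x).le⟩, rfl⟩
  have hSle : ∀ ω (x : ℝ), |F ω x - x| ≤ S ω := fun ω x => le_ciSup (hbdd ω) x
  -- bound on iterates
  have hbound : ∀ (n : ℕ) ω, |iterLift σ F n ω 0| ≤ ∑ k ∈ Finset.range n, S (σ^[k] ω) := by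
    intro n
    induction n with
    | zero => intro ω; simp [iterLift]
    | succ n ih =>
      intro ω
      have hstep : iterLift σ F (n + 1) ω 0 = F (σ^[n] ω) (iterLift σ F n ω 0) := by
        have := iterLift_comp σ F n 1 ω 0
        simpa [iterLift] using this
      rw [hstep, Finset.sum_range_succ]
      have h1 := hSle (σ^[n] ω) (iterLift σ F n ω 0)
      have h2 := ih ω
      have h3 : |F (σ^[n] ω) (iterLift σ F n ω 0)| ≤
          |F (σ^[n] ω) (iterLift σ F n ω 0) - iterLift σ F n ω 0| + |iterLift σ F n ω 0| := by
        calc |F (σ^[n] ω) (iterLift σ F n ω 0)|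
            = |(F (σ^[n] ω) (iterLift σ F n ω 0) - iterLift σ F n ω 0) + iterLift σ F n ω 0| := by
              ring_nf
          _ ≤ _ := abs_add_le _ _
      linarith
  -- integrability
  have hSint : ∀ k : ℕ, Integrable (fun ω => S (σ^[k] ω)) ℙ := fun k =>
    ((hσ.iterate k).integrable_comp hint.aestronglyMeasurable).mpr hint
  have hIint : ∀ n : ℕ, Integrable (fun ω => iterLift σ F n ω 0) ℙ := by
    intro n
    refine Integrable.mono' (integrable_finset_sum (Finset.range n) (fun k _ => hSint k))
      ((hmeas0 n).aestronglyMeasurable) ?_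
    exact Filter.Eventually.of_forall (fun ω => by
      simpa [Real.norm_eq_abs] using hbound n ω)
  -- shifted integral
  have hshift_int : ∀ n m : ℕ,
      ∫ ω, iterLift σ F m (σ^[n] ω) 0 ∂ℙ = ∫ ω, iterLift σ F m ω 0 ∂ℙ := by
    intro n m
    have hmp := hσ.iterate n
    calc ∫ ω, iterLift σ F m (σ^[n] ω) 0 ∂ℙ
        = ∫ ω, iterLift σ F m ω 0 ∂(Measure.map (σ^[n]) ℙ) :=
          (integral_map hmp.measurable.aemeasurable
            (by rw [hmp.map_eq]; exact (hmeas0 m).aestronglyMeasurable)).symm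
      _ = _ := by rw [hmp.map_eq]
  -- main argument
  intro n m hn hm
  have hint_h : Integrable (fun ω => iterLift σ F m (σ^[n] ω) 0) ℙ :=
    ((hσ.iterate n).integrable_comp (hIint m).aestronglyMeasurable).mpr (hIint m)
  have key : ∀ ω, |iterLift σ F (n + m) ω 0 - iterLift σ F n ω 0
      - iterLift σ F m (σ^[n] ω) 0| ≤ 1 := by
    intro ω
    have hG : Monotone (iterLift σ F m (σ^[n] ω)) := hmonoN m _
    have hb := lift_disp_bound hG (hdegN m (σ^[n] ω)) (iterLift σ F n ω 0)
    have hf : iterLift σ F (n + m) ω 0 = iterLift σ F m (σ^[n] ω) (iterLift σ F n ω 0) :=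
      iterLift_comp σ F n m ω 0
    rw [hf]
    simpa [iterLift] using hb
  have e1 : ∫ ω, (iterLift σ F (n + m) ω 0 - iterLift σ F n ω 0
      - iterLift σ F m (σ^[n] ω) 0) ∂ℙ
      = (∫ ω, iterLift σ F (n + m) ω 0 ∂ℙ) - (∫ ω, iterLift σ F n ω 0 ∂ℙ)
        - ∫ ω, iterLift σ F m (σ^[n] ω) 0 ∂ℙ := by
    have eA := integral_sub ((hIint (n + m)).sub (hIint n)) hint_h
    simp only [Pi.sub_apply] at eA
    rw [eA, integral_sub (hIint (n + m)) (hIint n)]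
  rw [← hshift_int n m, ← e1]
  calc |∫ ω, (iterLift σ F (n + m) ω 0 - iterLift σ F n ω 0
        - iterLift σ F m (σ^[n] ω) 0) ∂ℙ|
      ≤ ∫ ω, |iterLift σ F (n + m) ω 0 - iterLift σ F n ω 0
        - iterLift σ F m (σ^[n] ω) 0| ∂ℙ := by
        simpa [Real.norm_eq_abs] using
          norm_integral_le_integral_norm (fun ω => iterLift σ F (n + m) ω 0
            - iterLift σ F n ω 0 - iterLift σ F m (σ^[n] ω) 0) (μ := ℙ)
    _ ≤ ∫ _ω, (1 : ℝ) ∂ℙ := by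
        refine integral_mono ?_ (integrable_const 1) (fun ω => key ω)
        exact (((hIint (n + m)).sub (hIint n)).sub hint_h).abs
    _ = 1 := by simp
end

section
/- Let (Ω, ℱ, ℙ, σ) be a measure-preserving dynamical system, let f : Ω → ℋ generate a random circle homeomorphism, and let F be an integrable lift of f, i.e. ∫_Ω ‖Δ_{F_ω}‖_∞ dℙ(ω) < ∞. Suppose (Li–Lu) that for ℙ-almost every ω the random rotation number ρ_F(ω) = lim_{n→∞} F^(n)_ω(0)/n exists and defines an integrable function on Ω, and set ρ̂(F) = ∫_Ω ρ_F dℙ. Then for every n ≥ 1, |(1/n) ∫_Ω F^(n)_ω(0) dℙ(ω) − ρ̂(F)| ≤ 1/n. -/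
open MeasureTheory Filter Topology

namespace MeanRotAux

variable {Ω : Type*} {σ : Ω → Ω} {F : Ω → ℝ → ℝ}

lemma iterLift_add (σ : Ω → Ω) (F : Ω → ℝ → ℝ) (m n : ℕ) (ω : Ω) (x : ℝ) :
    iterLift σ F (m + n) ω x = iterLift σ F m (σ^[n] ω) (iterLift σ F n ω x) := by
  induction n generalizing ω x with
  | zero => rfl
  | succ n ih =>
    show iterLift σ F (m + n) (σ ω) (F ω x) = _
    rw [ih, Function.iterate_succ_apply]
    rfl

lemma iterLift_monotone (hmono : ∀ ω, Monotone (F ω)) :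
    ∀ (n : ℕ) (ω : Ω), Monotone (iterLift σ F n ω) := by
  intro n
  induction n with
  | zero => intro ω; exact monotone_id
  | succ n ih => intro ω; exact (ih (σ ω)).comp (hmono ω)

lemma iterLift_map_add_one (hdeg : ∀ ω (x : ℝ), F ω (x + 1) = F ω x + 1) :
    ∀ (n : ℕ) (ω : Ω) (x : ℝ), iterLift σ F n ω (x + 1) = iterLift σ F n ω x + 1 := by
  intro n
  induction n with
  | zero => intro ω x; rfl
  | succ n ih =>
    intro ω x
    show iterLift σ F n (σ ω) (F ω (x + 1)) = iterLift σ F n (σ ω) (F ω x) + 1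
    rw [hdeg, ih]

/-- The iterated lift as a `CircleDeg1Lift`. -/
def iterCDL (σ : Ω → Ω) (F : Ω → ℝ → ℝ) (hmono : ∀ ω, Monotone (F ω))
    (hdeg : ∀ ω (x : ℝ), F ω (x + 1) = F ω x + 1)
    (n : ℕ) (ω : Ω) : CircleDeg1Lift :=
  ⟨⟨iterLift σ F n ω, iterLift_monotone hmono n ω⟩, fun x => iterLift_map_add_one hdeg n ω x⟩

@[simp] lemma iterCDL_apply (σ : Ω → Ω) (F : Ω → ℝ → ℝ) (hmono : ∀ ω, Monotone (F ω))
    (hdeg : ∀ ω (x : ℝ), F ω (x + 1) = F ω x + 1) (n : ℕ) (ω : Ω) (x : ℝ) :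
    iterCDL σ F hmono hdeg n ω x = iterLift σ F n ω x := rfl

lemma disp (G : CircleDeg1Lift) (x : ℝ) : |G x - x - G 0| ≤ 1 := by
  have h1 := G.le_map_of_map_zero x
  have h2 := G.map_le_of_map_zero x
  have h3 := Int.sub_one_lt_floor x
  have h4 := Int.ceil_lt_add_one x
  rw [abs_le]
  constructor <;> linarith

end MeanRotAux

open MeanRotAux

/-- let `F` be an integrable lift of a random circle homeomorphism over a
measure-preserving system (`∫ ‖Δ_{F_ω}‖_∞ dℙ(ω) < ∞`).  Suppose (Li–Lu) that for
ℙ-almost every `ω` the random rotation number `ρ_F(ω) = lim_n F^{(n)}_ω(0)/n` exists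
and that `ρ_F` is integrable, and set `ρ̂(F) = ∫ ρ_F dℙ`.  Then for every `n ≥ 1`,
`|(1/n) ∫ F^{(n)}_ω(0) dℙ(ω) − ρ̂(F)| ≤ 1/n`. -/
theorem mean_rotation_error_bound
    {Ω : Type*} [MeasurableSpace Ω] (ℙ : Measure Ω) [IsProbabilityMeasure ℙ]
    (σ : Ω → Ω) (hσ : MeasurePreserving σ ℙ ℙ)
    (F : Ω → ℝ → ℝ) (hmeas : Measurable (Function.uncurry F))
    (hmono : ∀ ω, StrictMono (F ω)) (hcont : ∀ ω, Continuous (F ω))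
    (hsurj : ∀ ω, Function.Surjective (F ω))
    (hdeg : ∀ ω (x : ℝ), F ω (x + 1) = F ω x + 1)
    (hint : Integrable (fun ω => ⨆ x : ℝ, |F ω x - x|) ℙ)
    (ρ : Ω → ℝ) (hρint : Integrable ρ ℙ)
    (hρ : ∀ᵐ ω ∂ℙ, Tendsto (fun n : ℕ => iterLift σ F n ω 0 / n) atTop (𝓝 (ρ ω))) :
    ∀ n : ℕ, 1 ≤ n →
      |(1 / n : ℝ) * (∫ ω, iterLift σ F n ω 0 ∂ℙ) - ∫ ω, ρ ω ∂ℙ| ≤ 1 / n := by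
  classical
  intro n hn
  set g : Ω → ℝ := fun ω => ⨆ x : ℝ, |F ω x - x| with hgdef
  have hmono' : ∀ ω, Monotone (F ω) := fun ω => (hmono ω).monotone
  set G : ℕ → Ω → CircleDeg1Lift := fun m ω => iterCDL σ F hmono' hdeg m ω with hGdef
  -- pointwise bound by g
  have habs : ∀ ω (y : ℝ), |F ω y - y| ≤ g ω := by
    intro ω y
    have hbdd : BddAbove (Set.range fun x : ℝ => |F ω x - x|) := by
      refine ⟨|F ω 0| + 1, ?_⟩
      rintro _ ⟨x, rfl⟩
      have h := disp (G 1 ω) x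
      have h10 : (G 1 ω) 0 = F ω 0 := rfl
      have h1x : (G 1 ω) x = F ω x := rfl
      rw [h10, h1x] at h
      calc |F ω x - x| ≤ |F ω x - x - F ω 0| + |F ω 0| := by
            have := abs_add_le (F ω x - x - F ω 0) (F ω 0); simpa using this
        _ ≤ 1 + |F ω 0| := by linarith
        _ = |F ω 0| + 1 := by ring
    exact le_ciSup hbdd y
  have hg0 : ∀ ω, 0 ≤ g ω := fun ω => le_trans (abs_nonneg _) (by simpa using habs ω 0)
  -- bound for iterates
  have hSbound : ∀ (m : ℕ) (ω : Ω) (x : ℝ),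
      |iterLift σ F m ω x - x| ≤ ∑ j ∈ Finset.range m, g (σ^[j] ω) := by
    intro m
    induction m with
    | zero => intro ω x; simp [iterLift]
    | succ m ih =>
      intro ω x
      have key : iterLift σ F (m + 1) ω x = iterLift σ F m (σ ω) (F ω x) := rfl
      rw [key, Finset.sum_range_succ']
      have h1 := ih (σ ω) (F ω x)
      have h2 := habs ω x
      have hiter : ∀ j : ℕ, σ^[j + 1] ω = σ^[j] (σ ω) := fun j =>
        Function.iterate_succ_apply σ j ω
      simp only [hiter, Function.iterate_zero_apply]
      calc |iterLift σ F m (σ ω) (F ω x) - x|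
          ≤ |iterLift σ F m (σ ω) (F ω x) - F ω x| + |F ω x - x| := abs_sub_le _ _ _
        _ ≤ (∑ j ∈ Finset.range m, g (σ^[j] (σ ω))) + g ω := add_le_add h1 h2
  -- measurability
  have hσm := hσ.measurable
  have hUmeas : ∀ m : ℕ, Measurable (Function.uncurry (iterLift σ F m)) := by
    intro m
    induction m with
    | zero => exact measurable_snd
    | succ m ih =>
      have : Function.uncurry (iterLift σ F (m + 1)) =
          fun p : Ω × ℝ => Function.uncurry (iterLift σ F m) (σ p.1, F p.1 p.2) := rfl
      rw [this]
      exact ih.comp ((hσm.comp measurable_fst).prodMk hmeas)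
  have hhm : ∀ m : ℕ, Measurable (fun ω => iterLift σ F m ω 0) := fun m =>
    (hUmeas m).comp (measurable_id.prodMk measurable_const)
  -- integrability
  have hgj : ∀ j : ℕ, Integrable (fun ω => g (σ^[j] ω)) ℙ := fun j =>
    ((hσ.iterate j).integrable_comp hint.aestronglyMeasurable).2 hint
  have hS_int : ∀ m : ℕ, Integrable (fun ω => ∑ j ∈ Finset.range m, g (σ^[j] ω)) ℙ := fun m =>
    integrable_finset_sum _ fun j _ => hgj j
  have hhint : ∀ m : ℕ, Integrable (fun ω => iterLift σ F m ω 0) ℙ := by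
    intro m
    refine (hS_int m).mono' (hhm m).aestronglyMeasurable ?_
    filter_upwards with ω
    have := hSbound m ω 0
    simpa [Real.norm_eq_abs] using this
  -- integrals are invariant under composition with iterates of σ
  have hcomp_eq : ∀ (φ : Ω → ℝ), AEStronglyMeasurable φ ℙ → ∀ j : ℕ,
      ∫ ω, φ (σ^[j] ω) ∂ℙ = ∫ ω, φ ω ∂ℙ := by
    intro φ hφ j
    have h1 : AEStronglyMeasurable φ (Measure.map σ^[j] ℙ) := by
      rw [(hσ.iterate j).map_eq]; exact hφ
    rw [← integral_map (hσ.iterate j).measurable.aemeasurable h1, (hσ.iterate j).map_eq]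
  have hcompint : ∀ (m j : ℕ), Integrable (fun ω => iterLift σ F m (σ^[j] ω) 0) ℙ := fun m j =>
    ((hσ.iterate j).integrable_comp (hhm m).aestronglyMeasurable).2 (hhint m)
  set a : ℕ → ℝ := fun m => ∫ ω, iterLift σ F m ω 0 ∂ℙ with hadef
  -- quasi-additivity, pointwise and integrated
  have hqa : ∀ (k : ℕ) (ω : Ω),
      |iterLift σ F ((k + 1) * n) ω 0 - iterLift σ F (k * n) ω 0
        - iterLift σ F n (σ^[k * n] ω) 0| ≤ 1 := by
    intro k ω
    have h1 : (k + 1) * n = n + k * n := by ring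
    rw [h1, iterLift_add]
    exact disp (G n (σ^[k * n] ω)) (iterLift σ F (k * n) ω 0)
  have hqa_int : ∀ k : ℕ, |a ((k + 1) * n) - a (k * n) - a n| ≤ 1 := by
    intro k
    have h3 : ∫ ω, iterLift σ F n (σ^[k * n] ω) 0 ∂ℙ = a n :=
      hcomp_eq _ (hhm n).aestronglyMeasurable (k * n)
    have hE : ∫ ω, (iterLift σ F ((k + 1) * n) ω 0 - iterLift σ F (k * n) ω 0
          - iterLift σ F n (σ^[k * n] ω) 0) ∂ℙ
        = a ((k + 1) * n) - a (k * n) - a n := by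
      have hAB : Integrable (fun ω => iterLift σ F ((k + 1) * n) ω 0
          - iterLift σ F (k * n) ω 0) ℙ := (hhint ((k + 1) * n)).sub (hhint (k * n))
      rw [integral_sub hAB (hcompint n (k * n)),
        integral_sub (hhint ((k + 1) * n)) (hhint (k * n)), h3]
    rw [← hE]
    have := norm_integral_le_of_norm_le_const (C := 1) (μ := ℙ)
      (f := fun ω => iterLift σ F ((k + 1) * n) ω 0 - iterLift σ F (k * n) ω 0
        - iterLift σ F n (σ^[k * n] ω) 0)
      (ae_of_all _ fun ω => by simpa [Real.norm_eq_abs] using hqa k ω)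
    simpa [Real.norm_eq_abs] using this
  have hqa_iter : ∀ k : ℕ, 1 ≤ k → |a (k * n) - k * a n| ≤ (k : ℝ) - 1 := by
    intro k hk
    induction k with
    | zero => omega
    | succ k ih =>
      rcases Nat.eq_zero_or_pos k with hk0 | hk1
      · subst hk0; simp
      · have h1 := hqa_int k
        have h2 := ih hk1
        have hsplit : a ((k + 1) * n) - ((k : ℝ) + 1) * a n =
            (a ((k + 1) * n) - a (k * n) - a n) + (a (k * n) - (k : ℝ) * a n) := by ring
        push_cast
        rw [hsplit]
        calc |(a ((k + 1) * n) - a (k * n) - a n) + (a (k * n) - (k : ℝ) * a n)|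
            ≤ |a ((k + 1) * n) - a (k * n) - a n| + |a (k * n) - (k : ℝ) * a n| := abs_add_le _ _
          _ ≤ 1 + ((k : ℝ) - 1) := add_le_add h1 h2
          _ = (k : ℝ) + 1 - 1 := by ring
  -- the normalized family
  set f : ℕ → Ω → ℝ := fun m ω => iterLift σ F m ω 0 / m with hfdef
  have hfmeas : ∀ m, AEStronglyMeasurable (f m) ℙ := fun m =>
    ((hhm m).div_const _).aestronglyMeasurable
  have hfint : ∀ m, Integrable (f m) ℙ := fun m => (hhint m).div_const _
  -- uniform integrability
  have hminint : ∀ M : ℕ, Integrable (fun ω => min (g ω) (M : ℝ)) ℙ := by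
    intro M
    have haesm : AEStronglyMeasurable (fun ω => min (g ω) (M : ℝ)) ℙ :=
      hint.aestronglyMeasurable.inf aestronglyMeasurable_const
    refine (hint.abs.add (integrable_const (M : ℝ))).mono' haesm ?_
    filter_upwards with ω
    have hM0 : (0 : ℝ) ≤ (M : ℝ) := Nat.cast_nonneg M
    have h2 : (0 : ℝ) ≤ min (g ω) (M : ℝ) := le_min (hg0 ω) hM0
    simp only [Pi.add_apply, Real.norm_eq_abs, abs_le]
    constructor
    · linarith [abs_nonneg (g ω)]
    · linarith [min_le_left (g ω) (M : ℝ), le_abs_self (g ω)]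
  have hr_int : ∀ M : ℕ, Integrable (fun ω => g ω - min (g ω) (M : ℝ)) ℙ := fun M =>
    hint.sub (hminint M)
  have hr_nonneg : ∀ (M : ℕ) (ω : Ω), 0 ≤ g ω - min (g ω) (M : ℝ) := fun M ω =>
    sub_nonneg.2 (min_le_left _ _)
  have hr_tendsto : Tendsto (fun M : ℕ => ∫ ω, (g ω - min (g ω) (M : ℝ)) ∂ℙ) atTop (𝓝 0) := by
    have h0 : (0 : ℝ) = ∫ _ω, (0 : ℝ) ∂ℙ := by simp
    rw [h0]
    refine tendsto_integral_of_dominated_convergence (fun ω => |g ω|)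
      (fun M => (hr_int M).aestronglyMeasurable) hint.abs ?_ ?_
    · intro M
      filter_upwards with ω
      rw [Real.norm_eq_abs, abs_of_nonneg (hr_nonneg M ω)]
      have : min (g ω) (M : ℝ) ≥ 0 := le_min (hg0 ω) (Nat.cast_nonneg M)
      have := le_abs_self (g ω)
      linarith [le_min (hg0 ω) (Nat.cast_nonneg (α := ℝ) M)]
    · filter_upwards with ω
      have hev : ∀ᶠ M : ℕ in atTop, g ω - min (g ω) (M : ℝ) = 0 := by
        filter_upwards [eventually_ge_atTop ⌈g ω⌉₊] with M hM
        have hgM : g ω ≤ (M : ℝ) := le_trans (Nat.le_ceil _) (by exact_mod_cast hM)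
        rw [min_eq_left hgM]; ring
      exact tendsto_const_nhds.congr' (hev.mono fun M h => h.symm)
  have hUI : UnifIntegrable f 1 ℙ := by
    intro ε hε
    obtain ⟨M, hM⟩ : ∃ M : ℕ, ∫ ω, (g ω - min (g ω) (M : ℝ)) ∂ℙ ≤ ε / 2 :=
      (hr_tendsto.eventually_le_const (half_pos hε)).exists
    set δ : ℝ := ε / (2 * (M + 1)) with hδdef
    have hδpos : 0 < δ := by positivity
    refine ⟨δ, hδpos, ?_⟩
    intro m s hs hsμ
    rcases Nat.eq_zero_or_pos m with hm0 | hm1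
    · subst hm0
      have hzero : s.indicator (f 0) = fun _ω => (0 : ℝ) := by
        funext ω
        simp [hfdef, iterLift, Set.indicator_apply]
      rw [hzero]
      simpa [eLpNorm_zero'] using (zero_le (ENNReal.ofReal ε))
    · have hsμ' : (ℙ s).toReal ≤ δ := ENNReal.toReal_le_of_le_ofReal hδpos.le hsμ
      have hmpos : (0 : ℝ) < (m : ℝ) := by exact_mod_cast hm1
      -- pointwise bound
      have e1 : ∀ ω, |f m ω| ≤ (∑ j ∈ Finset.range m, g (σ^[j] ω)) / m := by
        intro ω
        have h1 : |f m ω| = |iterLift σ F m ω 0| / m := by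
          rw [hfdef]; rw [abs_div, abs_of_pos hmpos]
        rw [h1]
        have h2 : |iterLift σ F m ω 0| ≤ ∑ j ∈ Finset.range m, g (σ^[j] ω) := by
          simpa using hSbound m ω 0
        gcongr
      -- set integral estimate for each composed g
      have e4 : ∀ j : ℕ, ∫ ω in s, g (σ^[j] ω) ∂ℙ ≤ (M : ℝ) * δ + ε / 2 := by
        intro j
        have hint_min : Integrable (fun ω => min (g (σ^[j] ω)) (M : ℝ)) ℙ :=
          ((hσ.iterate j).integrable_comp (hminint M).aestronglyMeasurable).2 (hminint M)
        have hint_r : Integrable (fun ω => g (σ^[j] ω) - min (g (σ^[j] ω)) (M : ℝ)) ℙ :=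
          ((hσ.iterate j).integrable_comp (hr_int M).aestronglyMeasurable).2 (hr_int M)
        have hstep : ∫ ω in s, g (σ^[j] ω) ∂ℙ =
            (∫ ω in s, min (g (σ^[j] ω)) (M : ℝ) ∂ℙ)
              + ∫ ω in s, (g (σ^[j] ω) - min (g (σ^[j] ω)) (M : ℝ)) ∂ℙ := by
          calc ∫ ω in s, g (σ^[j] ω) ∂ℙ
              = ∫ ω in s, (min (g (σ^[j] ω)) (M : ℝ)
                  + (g (σ^[j] ω) - min (g (σ^[j] ω)) (M : ℝ))) ∂ℙ := by
                apply integral_congr_ae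
                filter_upwards with ω
                ring
            _ = _ := integral_add hint_min.restrict hint_r.restrict
        have h5 : ∫ ω in s, min (g (σ^[j] ω)) (M : ℝ) ∂ℙ ≤ (M : ℝ) * δ := by
          have hb : ∫ ω in s, min (g (σ^[j] ω)) (M : ℝ) ∂ℙ ≤ ∫ _ω in s, (M : ℝ) ∂ℙ :=
            integral_mono hint_min.restrict (integrable_const _) fun ω => min_le_right _ _
          have hc : ∫ _ω in s, (M : ℝ) ∂ℙ = (ℙ s).toReal * M := by
            rw [setIntegral_const]; simp [smul_eq_mul, Measure.real]
          calc ∫ ω in s, min (g (σ^[j] ω)) (M : ℝ) ∂ℙ ≤ (ℙ s).toReal * M := hb.trans_eq hc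
            _ ≤ δ * M := by
                apply mul_le_mul_of_nonneg_right hsμ' (by positivity)
            _ = (M : ℝ) * δ := mul_comm _ _
        have h6 : ∫ ω in s, (g (σ^[j] ω) - min (g (σ^[j] ω)) (M : ℝ)) ∂ℙ ≤ ε / 2 := by
          have hb : ∫ ω in s, (g (σ^[j] ω) - min (g (σ^[j] ω)) (M : ℝ)) ∂ℙ
              ≤ ∫ ω, (g (σ^[j] ω) - min (g (σ^[j] ω)) (M : ℝ)) ∂ℙ :=
            setIntegral_le_integral hint_r (ae_of_all _ fun ω => hr_nonneg M (σ^[j] ω))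
          have hc : ∫ ω, (g (σ^[j] ω) - min (g (σ^[j] ω)) (M : ℝ)) ∂ℙ
              = ∫ ω, (g ω - min (g ω) (M : ℝ)) ∂ℙ :=
            hcomp_eq _ (hr_int M).aestronglyMeasurable j
          exact hb.trans (hc ▸ hM)
        linarith [hstep, h5, h6]
      -- assemble the set-integral bound
      have key : ∫ ω in s, |f m ω| ∂ℙ ≤ ε := by
        have e2 : ∫ ω in s, |f m ω| ∂ℙ
            ≤ ∫ ω in s, (∑ j ∈ Finset.range m, g (σ^[j] ω)) / m ∂ℙ :=
          integral_mono (hfint m).abs.restrict ((hS_int m).div_const _).restrict e1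
        have e3 : ∫ ω in s, (∑ j ∈ Finset.range m, g (σ^[j] ω)) / m ∂ℙ
            = (∑ j ∈ Finset.range m, ∫ ω in s, g (σ^[j] ω) ∂ℙ) / m := by
          rw [integral_div, integral_finset_sum _ fun j _ => (hgj j).restrict]
        have e5 : (∑ j ∈ Finset.range m, ∫ ω in s, g (σ^[j] ω) ∂ℙ) / m
            ≤ ((M : ℝ) * δ + ε / 2) := by
          have : (∑ j ∈ Finset.range m, ∫ ω in s, g (σ^[j] ω) ∂ℙ)
              ≤ (m : ℝ) * ((M : ℝ) * δ + ε / 2) := by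
            calc (∑ j ∈ Finset.range m, ∫ ω in s, g (σ^[j] ω) ∂ℙ)
                ≤ ∑ _j ∈ Finset.range m, ((M : ℝ) * δ + ε / 2) :=
                  Finset.sum_le_sum fun j _ => e4 j
              _ = (m : ℝ) * ((M : ℝ) * δ + ε / 2) := by
                  rw [Finset.sum_const, Finset.card_range]; ring
          rw [div_le_iff₀ hmpos]
          linarith
        have e6 : (M : ℝ) * δ ≤ ε / 2 := by
          rw [hδdef, ← mul_div_assoc, div_le_div_iff₀ (by positivity) (by norm_num : (0:ℝ) < 2)]
          nlinarith [hε.le, Nat.cast_nonneg (α := ℝ) M]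
        linarith [e2, e3.le, e5]
      have hElp : eLpNorm (s.indicator (f m)) 1 ℙ
          = ENNReal.ofReal (∫ ω in s, |f m ω| ∂ℙ) := by
        rw [eLpNorm_one_eq_lintegral_enorm,
          ← ofReal_integral_norm_eq_lintegral_enorm ((hfint m).indicator hs)]
        congr 1
        rw [← integral_indicator hs]
        congr 1
        funext ω
        rw [norm_indicator_eq_indicator_norm]
        simp [Real.norm_eq_abs]
      rw [hElp]
      exact ENNReal.ofReal_le_ofReal key
  -- Vitali convergence
  have hρmem : MemLp ρ 1 ℙ := memLp_one_iff_integrable.2 hρint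
  have hLp := tendsto_Lp_finite_of_tendsto_ae (μ := ℙ) le_rfl ENNReal.one_ne_top
    hfmeas hρmem hUI hρ
  have hT : Tendsto (fun m => ∫ ω, f m ω ∂ℙ) atTop (𝓝 (∫ ω, ρ ω ∂ℙ)) := by
    refine tendsto_integral_of_L1 ρ hρint.aestronglyMeasurable (Eventually.of_forall hfint) ?_
    have : ∀ m : ℕ, (∫⁻ ω, ‖f m ω - ρ ω‖ₑ ∂ℙ) = eLpNorm (f m - ρ) 1 ℙ := by
      intro m
      rw [eLpNorm_one_eq_lintegral_enorm]
      simp [Pi.sub_apply]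
    simpa [this] using hLp
  -- conclude
  have hnpos : (0 : ℝ) < (n : ℝ) := by exact_mod_cast hn
  have hmulto : Tendsto (fun k : ℕ => k * n) atTop atTop :=
    tendsto_atTop_mono (fun k => Nat.le_mul_of_pos_right k (by omega)) tendsto_id
  have hsubseq : Tendsto (fun k : ℕ => ∫ ω, f (k * n) ω ∂ℙ) atTop (𝓝 (∫ ω, ρ ω ∂ℙ)) :=
    hT.comp hmulto
  have hdist : Tendsto (fun k : ℕ => |(∫ ω, f (k * n) ω ∂ℙ) - a n / n|) atTop
      (𝓝 |(∫ ω, ρ ω ∂ℙ) - a n / n|) := ((hsubseq.sub_const _).abs)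
  have hbound : ∀ᶠ k : ℕ in atTop, |(∫ ω, f (k * n) ω ∂ℙ) - a n / n| ≤ 1 / n := by
    filter_upwards [eventually_ge_atTop 1] with k hk
    have hkpos : (0 : ℝ) < (k : ℝ) := by exact_mod_cast hk
    have h5 : ∫ ω, f (k * n) ω ∂ℙ = a (k * n) / ((k : ℝ) * n) := by
      rw [hfdef]
      rw [integral_div]
      push_cast
      ring_nf
      simp only [hadef]
      ring
    have h6 := hqa_iter k hk
    rw [h5]
    have h7 : a (k * n) / ((k : ℝ) * n) - a n / n
        = (a (k * n) - (k : ℝ) * a n) / ((k : ℝ) * n) := by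
      field_simp
    rw [h7, abs_div, abs_of_pos (mul_pos hkpos hnpos), div_le_div_iff₀ (mul_pos hkpos hnpos) hnpos]
    nlinarith [hnpos, hkpos, h6]
  have hfinal : |(∫ ω, ρ ω ∂ℙ) - a n / n| ≤ 1 / n := le_of_tendsto hdist hbound
  have hgoal : (1 / (n : ℝ)) * (∫ ω, iterLift σ F n ω 0 ∂ℙ) = a n / n := by
    rw [hadef]; ring
  rw [hgoal, abs_sub_comm]
  exact hfinal
end
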